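/- For even n and any α ∈ [0, 1/2]: consider the two graphs G1, G2 from the hardness gadget (agreeing on the first n/2 arrivals, with v_j adjacent to u_j and u_{j+n/2} for j ≤ n/2, and the second half adjacent to u_{j−n/2} in G1 versus u_j in G2). Any deterministic strategy for the first n/2 arrivals that allows at least (1−α)·n total matches when completed on G1 can achieve at most (1/2 + α)·n total matches when completed on G2. Hence no algorithm can be simultaneously (1−α)-consistent and strictly more than (1/2 + α)-robust. -/

import Mathlib

/-- A partial assignment `μ` of online vertices (indexed by `Fin n`) to offline vertices
is a matching respecting the neighborhoods `N` if every assigned offline vertex is a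
neighbor, and no offline vertex is used twice. -/
def RespectsMatching (n : ℕ) (N : Fin n → Set (Fin n)) (μ : Fin n → Option (Fin n)) : Prop :=
  (∀ j u, μ j = some u → u ∈ N j) ∧
  (∀ j j' u, μ j = some u → μ j' = some u → j = j')

/-- Number of matched online vertices. -/
def matchSize (n : ℕ) (μ : Fin n → Option (Fin n)) : ℕ :=
  (Finset.univ.filter fun j => (μ j).isSome).card

/-- Neighborhoods in the gadget graph `G1`. -/
def gadgetN1 (n : ℕ) : Fin n → Set (Fin n) := fun j =>
  if (j : ℕ) < n / 2 then {u | (u : ℕ) = (j : ℕ) ∨ (u : ℕ) = (j : ℕ) + n / 2}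
  else {u | (u : ℕ) = (j : ℕ) - n / 2}

/-- Neighborhoods in the gadget graph `G2`. -/
def gadgetN2 (n : ℕ) : Fin n → Set (Fin n) := fun j =>
  if (j : ℕ) < n / 2 then {u | (u : ℕ) = (j : ℕ) ∨ (u : ℕ) = (j : ℕ) + n / 2}
  else {u | u = j}

/-- Quantitative hardness: for any `α ∈ [0, 1/2]`, any matching of the gadget graph `G1`
of size at least `(1 - α) n` forces any matching of `G2` that agrees with it on the first
`n/2` online vertices to have size at most `(1/2 + α) n`.  Hence no algorithm can be
simultaneously `(1-α)`-consistent and strictly more than `(1/2 + α)`-robust. -/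
theorem hardness_gadget_tradeoff (n : ℕ) (hn : Even n) (hpos : 0 < n)
    (α : ℝ) (hα0 : 0 ≤ α) (hα1 : α ≤ 1 / 2)
    (μ₁ μ₂ : Fin n → Option (Fin n))
    (h₁ : RespectsMatching n (gadgetN1 n) μ₁)
    (hsize₁ : (1 - α) * n ≤ (matchSize n μ₁ : ℝ))
    (h₂ : RespectsMatching n (gadgetN2 n) μ₂)
    (hagree : ∀ j : Fin n, (j : ℕ) < n / 2 → μ₂ j = μ₁ j) :
    (matchSize n μ₂ : ℝ) ≤ (1 / 2 + α) * n := by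
  classical
  obtain ⟨m, hm⟩ := hn
  have hm2 : n / 2 = m := by omega
  -- extract neighborhood facts
  have hN1low : ∀ (j u : Fin n), (j:ℕ) < m → μ₁ j = some u →
      (u:ℕ) = (j:ℕ) ∨ (u:ℕ) = (j:ℕ) + m := by
    intro j u hj h
    have := h₁.1 j u h
    simp only [gadgetN1, hm2, if_pos hj, Set.mem_setOf_eq] at this
    exact this
  have hN1high : ∀ (j u : Fin n), m ≤ (j:ℕ) → μ₁ j = some u → (u:ℕ) = (j:ℕ) - m := by
    intro j u hj h
    have := h₁.1 j u h
    simp only [gadgetN1, hm2, if_neg (by omega : ¬ (j:ℕ) < m), Set.mem_setOf_eq] at this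
    exact this
  have hN2high : ∀ (j u : Fin n), m ≤ (j:ℕ) → μ₂ j = some u → u = j := by
    intro j u hj h
    have := h₂.1 j u h
    simp only [gadgetN2, hm2, if_neg (by omega : ¬ (j:ℕ) < m), Set.mem_setOf_eq] at this
    exact this
  have hagree' : ∀ j : Fin n, (j:ℕ) < m → μ₂ j = μ₁ j := by
    intro j hj; exact hagree j (by omega)
  set d : Fin n := ⟨0, hpos⟩ with hd
  set ν₁ : Fin n → ℕ := fun j => ((μ₁ j).getD d : Fin n).val with hν₁
  set ν₂ : Fin n → ℕ := fun j => ((μ₂ j).getD d : Fin n).val with hν₂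
  have hget₁ : ∀ (j u : Fin n), μ₁ j = some u → ν₁ j = (u:ℕ) := by
    intro j u h; simp [hν₁, h]
  have hget₂ : ∀ (j u : Fin n), μ₂ j = some u → ν₂ j = (u:ℕ) := by
    intro j u h; simp [hν₂, h]
  set Flow : Finset (Fin n) :=
    Finset.univ.filter (fun j : Fin n => (j:ℕ) < m ∧ ∃ u, μ₁ j = some u ∧ (u:ℕ) < m) with hFl
  set Fhigh : Finset (Fin n) :=
    Finset.univ.filter (fun j : Fin n => (j:ℕ) < m ∧ ∃ u, μ₁ j = some u ∧ m ≤ (u:ℕ)) with hFh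
  set S1 : Finset (Fin n) :=
    Finset.univ.filter (fun j : Fin n => m ≤ (j:ℕ) ∧ (μ₁ j).isSome) with hS1
  set S2 : Finset (Fin n) :=
    Finset.univ.filter (fun j : Fin n => m ≤ (j:ℕ) ∧ (μ₂ j).isSome) with hS2
  -- (a) Flow and S1 inject into low offline vertices
  have h_a : Flow.card + S1.card ≤ m := by
    have hdisj : Disjoint Flow S1 := by
      rw [Finset.disjoint_left]
      intro j hj hj'
      rw [hFl, Finset.mem_filter] at hj
      rw [hS1, Finset.mem_filter] at hj'
      have := hj.2.1; have := hj'.2.1; omega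
    rw [← Finset.card_union_of_disjoint hdisj]
    calc (Flow ∪ S1).card ≤ (Finset.range m).card := by
          apply Finset.card_le_card_of_injOn ν₁
          · intro j hj
            rw [Finset.mem_coe] at hj ⊢
            rw [Finset.mem_union, hFl, hS1, Finset.mem_filter, Finset.mem_filter] at hj
            rw [Finset.mem_range]
            rcases hj with ⟨-, hjm, u, hu, hum⟩ | ⟨-, hjm, hs⟩
            · rw [hget₁ j u hu]; exact hum
            · obtain ⟨u, hu⟩ := Option.isSome_iff_exists.mp hs
              rw [hget₁ j u hu, hN1high j u hjm hu]
              have := j.isLt; omega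
          · intro j hj j' hj' heq
            have hsome : ∀ k ∈ Flow ∪ S1, ∃ u, μ₁ k = some u := by
              intro k hk
              rw [Finset.mem_union, hFl, hS1,
                Finset.mem_filter, Finset.mem_filter] at hk
              rcases hk with ⟨-, -, u, hu, -⟩ | ⟨-, -, hs⟩
              · exact ⟨u, hu⟩
              · exact Option.isSome_iff_exists.mp hs
            obtain ⟨u, hu⟩ := hsome j hj
            obtain ⟨u', hu'⟩ := hsome j' hj'
            rw [hget₁ j u hu, hget₁ j' u' hu'] at heq
            have : u = u' := Fin.ext heq
            exact h₁.2 j j' u hu (this ▸ hu')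
      _ = m := Finset.card_range m
  -- (b) Fhigh and S2 inject into high offline vertices
  have h_b : Fhigh.card + S2.card ≤ m := by
    have hdisj : Disjoint Fhigh S2 := by
      rw [Finset.disjoint_left]
      intro j hj hj'
      rw [hFh, Finset.mem_filter] at hj
      rw [hS2, Finset.mem_filter] at hj'
      have := hj.2.1; have := hj'.2.1; omega
    rw [← Finset.card_union_of_disjoint hdisj]
    have hsome : ∀ k ∈ Fhigh ∪ S2, ∃ u, μ₂ k = some u ∧ m ≤ (u:ℕ) := by
      intro k hk
      rw [Finset.mem_union, hFh, hS2,
        Finset.mem_filter, Finset.mem_filter] at hk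
      rcases hk with ⟨-, hkm, u, hu, hum⟩ | ⟨-, hkm, hs⟩
      · exact ⟨u, by rw [hagree' k hkm]; exact hu, hum⟩
      · obtain ⟨u, hu⟩ := Option.isSome_iff_exists.mp hs
        have := hN2high k u hkm hu
        exact ⟨u, hu, by rw [this]; exact hkm⟩
    calc (Fhigh ∪ S2).card ≤ (Finset.Ico m n).card := by
          apply Finset.card_le_card_of_injOn ν₂
          · intro j hj
            obtain ⟨u, hu, hum⟩ := hsome j hj
            rw [Finset.mem_coe]
            rw [Finset.mem_Ico, hget₂ j u hu]
            exact ⟨hum, u.isLt⟩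
          · intro j hj j' hj' heq
            obtain ⟨u, hu, -⟩ := hsome j hj
            obtain ⟨u', hu', -⟩ := hsome j' hj'
            rw [hget₂ j u hu, hget₂ j' u' hu'] at heq
            have : u = u' := Fin.ext heq
            exact h₂.2 j j' u hu (this ▸ hu')
      _ = m := by rw [Nat.card_Ico]; omega
  -- (c) Flow and Fhigh are disjoint subsets of the first half
  have h_c : Flow.card + Fhigh.card ≤ m := by
    have hdisj : Disjoint Flow Fhigh := by
      rw [Finset.disjoint_left]
      intro j hj hj'
      rw [hFl, Finset.mem_filter] at hj
      rw [hFh, Finset.mem_filter] at hj'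
      obtain ⟨-, -, u, hu, hum⟩ := hj
      obtain ⟨-, -, u', hu', hum'⟩ := hj'
      rw [hu] at hu'
      have : u = u' := by injection hu'
      omega
    rw [← Finset.card_union_of_disjoint hdisj]
    calc (Flow ∪ Fhigh).card ≤ (Finset.range m).card := by
          refine Finset.card_le_card_of_injOn (fun j => (j:ℕ)) ?_ ?_
          · intro j hj
            rw [Finset.mem_coe] at hj ⊢
            rw [Finset.mem_union, hFl, hFh, Finset.mem_filter, Finset.mem_filter] at hj
            rw [Finset.mem_range]
            rcases hj with ⟨-, hjm, -⟩ | ⟨-, hjm, -⟩ <;> exact hjm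
          · intro j _ j' _ heq; exact Fin.ext heq
      _ = m := Finset.card_range m
  -- size bounds
  have hs1 : matchSize n μ₁ ≤ Flow.card + Fhigh.card + S1.card := by
    have hsub : (Finset.univ.filter fun j => (μ₁ j).isSome) ⊆ Flow ∪ Fhigh ∪ S1 := by
      intro j hj
      rw [Finset.mem_filter] at hj
      obtain ⟨-, hs⟩ := hj
      rw [Finset.mem_union, Finset.mem_union, hFl, hFh, hS1,
        Finset.mem_filter, Finset.mem_filter, Finset.mem_filter]
      by_cases hjm : (j:ℕ) < m
      · obtain ⟨u, hu⟩ := Option.isSome_iff_exists.mp hs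
        rcases lt_or_ge (u:ℕ) m with h' | h'
        · exact Or.inl (Or.inl ⟨Finset.mem_univ _, hjm, u, hu, h'⟩)
        · exact Or.inl (Or.inr ⟨Finset.mem_univ _, hjm, u, hu, h'⟩)
      · exact Or.inr ⟨Finset.mem_univ _, by omega, hs⟩
    calc matchSize n μ₁ ≤ (Flow ∪ Fhigh ∪ S1).card := Finset.card_le_card hsub
      _ ≤ (Flow ∪ Fhigh).card + S1.card := Finset.card_union_le _ _
      _ ≤ Flow.card + Fhigh.card + S1.card := by
          have := Finset.card_union_le Flow Fhigh; omega
  have hs2 : matchSize n μ₂ ≤ Flow.card + Fhigh.card + S2.card := by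
    have hsub : (Finset.univ.filter fun j => (μ₂ j).isSome) ⊆ Flow ∪ Fhigh ∪ S2 := by
      intro j hj
      rw [Finset.mem_filter] at hj
      obtain ⟨-, hs⟩ := hj
      rw [Finset.mem_union, Finset.mem_union, hFl, hFh, hS2,
        Finset.mem_filter, Finset.mem_filter, Finset.mem_filter]
      by_cases hjm : (j:ℕ) < m
      · obtain ⟨u, hu⟩ := Option.isSome_iff_exists.mp hs
        rw [hagree' j hjm] at hu
        rcases lt_or_ge (u:ℕ) m with h' | h'
        · exact Or.inl (Or.inl ⟨Finset.mem_univ _, hjm, u, hu, h'⟩)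
        · exact Or.inl (Or.inr ⟨Finset.mem_univ _, hjm, u, hu, h'⟩)
      · exact Or.inr ⟨Finset.mem_univ _, by omega, hs⟩
    calc matchSize n μ₂ ≤ (Flow ∪ Fhigh ∪ S2).card := Finset.card_le_card hsub
      _ ≤ (Flow ∪ Fhigh).card + S2.card := Finset.card_union_le _ _
      _ ≤ Flow.card + Fhigh.card + S2.card := by
          have := Finset.card_union_le Flow Fhigh; omega
  -- combine
  have key : matchSize n μ₁ + matchSize n μ₂ ≤ 3 * m := by omega
  have hkey : (matchSize n μ₁ : ℝ) + (matchSize n μ₂ : ℝ) ≤ 3 * m := by exact_mod_cast key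
  have hnm : (n:ℝ) = 2 * m := by exact_mod_cast (by omega : n = 2 * m)
  linarith
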